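/- Fix U* ∈ [0,1]^n that is non-decreasing in j and satisfies U*_j = U*_k whenever φ_j = φ_k, and suppose λ > 0 is such that A*_j := min{1, λ/√(φ_j)} satisfies the budget equality Σ_{j=1}^{n} (1−U*_j)·A*_j·ψ_j = B. Then A* minimizes Σ_{j=1}^{n} (1−U*_j)/A_j over all A with 0 < A_j ≤ 1 for all j, (1−U*_j)·A_j non-increasing in j, and Σ_{j=1}^{n} (1−U*_j)·A_j·ψ_j ≤ B; that is, for every such A, Σ_{j=1}^{n} (1−U*_j)/A*_j ≤ Σ_{j=1}^{n} (1−U*_j)/A_j. -/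

import Mathlib

/-- Virtual cost of the uniform distribution over `{c 1, …, c n}`:
`ψ j = j·c j − (j−1)·c (j−1)`. -/
noncomputable def vc (c : ℕ → ℝ) (j : ℕ) : ℝ :=
  (j : ℝ) * c j - ((j : ℝ) - 1) * c (j - 1)

/-- `Avg(l,k) = (1/(k−l+1))·Σ_{t=l}^{k} ψ_t`. -/
noncomputable def avg (c : ℕ → ℝ) (l k : ℕ) : ℝ :=
  (∑ t ∈ Finset.Icc l k, vc c t) / ((k : ℝ) - (l : ℝ) + 1)

/-- `ψ'_l = min_{l ≤ k ≤ n} Avg(l,k)`. -/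
noncomputable def rvcAux (n : ℕ) (c : ℕ → ℝ) (l : ℕ) : ℝ :=
  sInf {x | ∃ k, l ≤ k ∧ k ≤ n ∧ x = avg c l k}

/-- Regularized virtual cost: `φ_j = max_{1 ≤ l ≤ j} ψ'_l`. -/
noncomputable def rvc (n : ℕ) (c : ℕ → ℝ) (j : ℕ) : ℝ :=
  sSup {x | ∃ l, 1 ≤ l ∧ l ≤ j ∧ x = rvcAux n c l}

section Aux
variable {n : ℕ} {c : ℕ → ℝ}

lemma sum_split (f : ℕ → ℝ) {l m k : ℕ} (hl : 1 ≤ l) (hlm : l ≤ m + 1) (hmk : m ≤ k) :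
    ∑ t ∈ Finset.Icc l k, f t
      = ∑ t ∈ Finset.Icc l m, f t + ∑ t ∈ Finset.Icc (m+1) k, f t := by
  obtain ⟨l', rfl⟩ := Nat.exists_eq_add_of_le hl
  rw [add_comm 1 l']
  rw [Finset.Icc_add_one_left_eq_Ioc, Finset.Icc_add_one_left_eq_Ioc, Finset.Icc_add_one_left_eq_Ioc]
  exact (Finset.sum_Ioc_consecutive f (by omega) hmk).symm

lemma len_pos {l k : ℕ} (hlk : l ≤ k) : (0:ℝ) < (k:ℝ) - (l:ℝ) + 1 := by
  have : (l:ℝ) ≤ (k:ℝ) := by exact_mod_cast hlk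
  linarith

lemma avg_mul {l k : ℕ} (hlk : l ≤ k) :
    avg c l k * ((k:ℝ) - (l:ℝ) + 1) = ∑ t ∈ Finset.Icc l k, vc c t := by
  rw [avg, div_mul_cancel₀]
  exact (len_pos hlk).ne'

lemma sum_vc_eq {l k : ℕ} (hl : 1 ≤ l) (hlk : l ≤ k) :
    ∑ t ∈ Finset.Icc l k, vc c t = (k:ℝ) * c k - ((l:ℝ) - 1) * c (l-1) := by
  induction k with
  | zero => omega
  | succ k ih =>
    rcases Nat.lt_or_ge l (k+1) with h | h
    · have hlk' : l ≤ k := by omega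
      rw [Finset.sum_Icc_succ_top (by omega), ih hlk']
      simp only [vc]
      push_cast [Nat.add_sub_cancel]
      ring
    · have : l = k + 1 := by omega
      subst this
      simp [vc]

lemma avg_ge (hmono : ∀ a b, a ≤ b → b ≤ n → c a ≤ c b)
    {l k : ℕ} (hl : 1 ≤ l) (hlk : l ≤ k) (hk : k ≤ n) : c k ≤ avg c l k := by
  rw [avg, le_div_iff₀ (len_pos hlk)]
  rw [sum_vc_eq hl hlk]
  have h1 : c (l-1) ≤ c k := hmono (l-1) k (by omega) hk
  have h2 : (1:ℝ) ≤ (l:ℝ) := by exact_mod_cast hl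
  have h3 : (l:ℝ) ≤ (k:ℝ) := by exact_mod_cast hlk
  nlinarith

lemma TI_eq (n : ℕ) (c : ℕ → ℝ) (l : ℕ) :
    {x | ∃ k, l ≤ k ∧ k ≤ n ∧ x = avg c l k} = (avg c l) '' (Set.Icc l n) := by
  ext x; constructor
  · rintro ⟨k, h1, h2, rfl⟩; exact ⟨k, ⟨h1, h2⟩, rfl⟩
  · rintro ⟨k, ⟨h1, h2⟩, rfl⟩; exact ⟨k, h1, h2, rfl⟩

lemma TI_finite (n : ℕ) (c : ℕ → ℝ) (l : ℕ) :
    {x | ∃ k, l ≤ k ∧ k ≤ n ∧ x = avg c l k}.Finite := by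
  rw [TI_eq]; exact (Set.finite_Icc l n).image _

lemma TI_nonempty {l : ℕ} (hln : l ≤ n) :
    {x | ∃ k, l ≤ k ∧ k ≤ n ∧ x = avg c l k}.Nonempty :=
  ⟨avg c l l, l, le_refl l, hln, rfl⟩

lemma rvcAux_le {l k : ℕ} (hlk : l ≤ k) (hk : k ≤ n) :
    rvcAux n c l ≤ avg c l k :=
  csInf_le (TI_finite n c l).bddBelow ⟨k, hlk, hk, rfl⟩

lemma le_rvcAux {l : ℕ} {x : ℝ} (hln : l ≤ n)
    (h : ∀ k, l ≤ k → k ≤ n → x ≤ avg c l k) : x ≤ rvcAux n c l := by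
  apply le_csInf (TI_nonempty hln)
  rintro b ⟨k, h1, h2, rfl⟩; exact h k h1 h2

lemma exists_rvcAux {l : ℕ} (hln : l ≤ n) :
    ∃ k, l ≤ k ∧ k ≤ n ∧ rvcAux n c l = avg c l k :=
  (TI_nonempty hln).csInf_mem (TI_finite n c l)

lemma rvcAux_ge_c1 (hmono : ∀ a b, a ≤ b → b ≤ n → c a ≤ c b)
    {l : ℕ} (hl : 1 ≤ l) (hln : l ≤ n) : c 1 ≤ rvcAux n c l := by
  apply le_rvcAux hln
  intro k h1 h2
  exact le_trans (hmono 1 k (by omega) h2) (avg_ge hmono hl h1 h2)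

lemma TJ_finite (n : ℕ) (c : ℕ → ℝ) (j : ℕ) :
    {x | ∃ l, 1 ≤ l ∧ l ≤ j ∧ x = rvcAux n c l}.Finite := by
  have : {x | ∃ l, 1 ≤ l ∧ l ≤ j ∧ x = rvcAux n c l}
      = (rvcAux n c) '' (Set.Icc 1 j) := by
    ext x; constructor
    · rintro ⟨l, h1, h2, rfl⟩; exact ⟨l, ⟨h1, h2⟩, rfl⟩
    · rintro ⟨l, ⟨h1, h2⟩, rfl⟩; exact ⟨l, h1, h2, rfl⟩
  rw [this]; exact (Set.finite_Icc 1 j).image _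

lemma TJ_nonempty {j : ℕ} (hj : 1 ≤ j) :
    {x | ∃ l, 1 ≤ l ∧ l ≤ j ∧ x = rvcAux n c l}.Nonempty :=
  ⟨rvcAux n c 1, 1, le_refl 1, hj, rfl⟩

lemma rvcAux_le_rvc {l j : ℕ} (hl : 1 ≤ l) (hlj : l ≤ j) :
    rvcAux n c l ≤ rvc n c j :=
  le_csSup (TJ_finite n c j).bddAbove ⟨l, hl, hlj, rfl⟩

lemma rvc_le {j : ℕ} {x : ℝ} (hj : 1 ≤ j)
    (h : ∀ l, 1 ≤ l → l ≤ j → rvcAux n c l ≤ x) : rvc n c j ≤ x := by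
  apply csSup_le (TJ_nonempty hj)
  rintro b ⟨l, h1, h2, rfl⟩; exact h l h1 h2

lemma rvc_ge_c1 (hn : 1 ≤ n) (hmono : ∀ a b, a ≤ b → b ≤ n → c a ≤ c b)
    {j : ℕ} (hj : 1 ≤ j) : c 1 ≤ rvc n c j :=
  le_trans (rvcAux_ge_c1 hmono (le_refl 1) hn) (rvcAux_le_rvc (le_refl 1) hj)

end Aux

noncomputable def bEnd (n : ℕ) (c : ℕ → ℝ) (l : ℕ) : ℕ :=
  sSup {k | l ≤ k ∧ k ≤ n ∧ avg c l k ≤ rvcAux n c l}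

section Blocks
variable {n : ℕ} {c : ℕ → ℝ}

lemma bEnd_mem {l : ℕ} (hln : l ≤ n) :
    l ≤ bEnd n c l ∧ bEnd n c l ≤ n ∧ avg c l (bEnd n c l) = rvcAux n c l := by
  have hne : {k | l ≤ k ∧ k ≤ n ∧ avg c l k ≤ rvcAux n c l}.Nonempty := by
    obtain ⟨k, h1, h2, h3⟩ := exists_rvcAux (c := c) hln
    exact ⟨k, h1, h2, le_of_eq h3.symm⟩
  have hbd : BddAbove {k | l ≤ k ∧ k ≤ n ∧ avg c l k ≤ rvcAux n c l} :=
    ⟨n, fun k hk => hk.2.1⟩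
  obtain ⟨h1, h2, h3⟩ := Nat.sSup_mem hne hbd
  exact ⟨h1, h2, le_antisymm h3 (rvcAux_le h1 h2)⟩

lemma le_bEnd {l k : ℕ} (hlk : l ≤ k) (hkn : k ≤ n)
    (h : avg c l k ≤ rvcAux n c l) : k ≤ bEnd n c l :=
  le_csSup ⟨n, fun k hk => hk.2.1⟩ ⟨hlk, hkn, h⟩

end Blocks

noncomputable def Lb (n : ℕ) (c : ℕ → ℝ) : ℕ → ℕ
  | 0 => 1
  | i+1 => if Lb n c i ≤ n then bEnd n c (Lb n c i) + 1 else n + 1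

section Blocks2
variable {n : ℕ} {c : ℕ → ℝ}

lemma Lb_pos (i : ℕ) : 1 ≤ Lb n c i := by
  cases i with
  | zero => simp [Lb]
  | succ i => rw [Lb]; split <;> omega

lemma Lb_succ_of_le {i : ℕ} (h : Lb n c i ≤ n) :
    Lb n c (i+1) = bEnd n c (Lb n c i) + 1 := by rw [Lb, if_pos h]

lemma Lb_le_succ (i : ℕ) : Lb n c i ≤ Lb n c (i+1) := by
  rw [Lb]; split
  · have := (bEnd_mem (c := c) ‹Lb n c i ≤ n›).1; omega
  · have : Lb n c i ≤ n + 1 := by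
      clear * -
      induction i with
      | zero => simp [Lb]
      | succ i ih =>
        rw [Lb]; split
        · have := (bEnd_mem (c := c) ‹_›).2.1; omega
        · omega
    omega

lemma Lb_lt_succ {i : ℕ} (h : Lb n c i ≤ n) : Lb n c i < Lb n c (i+1) := by
  rw [Lb_succ_of_le h]
  have := (bEnd_mem (c := c) h).1; omega

lemma Lb_mono : Monotone (Lb n c) :=
  monotone_nat_of_le_succ Lb_le_succ

lemma Lb_le_of_succ_le {i : ℕ} (h : Lb n c (i+1) ≤ n) : Lb n c i ≤ n := by
  by_contra hc
  rw [Lb, if_neg hc] at h; omega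

lemma Lb_gt {i : ℕ} (h : Lb n c i ≤ n) : i < Lb n c i := by
  induction i with
  | zero => simp [Lb]
  | succ i ih =>
    have h' : Lb n c i ≤ n := Lb_le_of_succ_le h
    have := ih h'
    have := Lb_lt_succ (c := c) h'
    omega

noncomputable def idx (n : ℕ) (c : ℕ → ℝ) (j : ℕ) : ℕ :=
  sSup {i | Lb n c i ≤ j}

lemma idx_spec {j : ℕ} (hj1 : 1 ≤ j) (hjn : j ≤ n) :
    Lb n c (idx n c j) ≤ j ∧ j ≤ bEnd n c (Lb n c (idx n c j)) := by
  have hne : {i | Lb n c i ≤ j}.Nonempty := ⟨0, by simp [Lb]; omega⟩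
  have hbd : BddAbove {i | Lb n c i ≤ j} := by
    refine ⟨j, fun i hi => ?_⟩
    have h1 : Lb n c i ≤ j := hi
    have := Lb_gt (c := c) (le_trans h1 hjn)
    omega
  have hmem : Lb n c (idx n c j) ≤ j := Nat.sSup_mem hne hbd
  refine ⟨hmem, ?_⟩
  have hLn : Lb n c (idx n c j) ≤ n := le_trans hmem hjn
  have hnot : ¬ Lb n c (idx n c j + 1) ≤ j := by
    intro hcon
    have : idx n c j + 1 ≤ idx n c j := le_csSup hbd hcon
    omega
  rw [Lb_succ_of_le hLn] at hnot
  omega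

lemma idx_eq {i t : ℕ} (hLn : Lb n c i ≤ n) (h1 : Lb n c i ≤ t)
    (h2 : t ≤ bEnd n c (Lb n c i)) : idx n c t = i := by
  have htn : t ≤ n := le_trans h2 (bEnd_mem (c := c) hLn).2.1
  have hbd : BddAbove {i' | Lb n c i' ≤ t} := by
    refine ⟨t, fun i' hi' => ?_⟩
    have h5 : Lb n c i' ≤ t := hi'
    have := Lb_gt (c := c) (le_trans h5 htn)
    omega
  have hge : i ≤ idx n c t := le_csSup hbd h1
  have hle : idx n c t ≤ i := by
    by_contra hc
    push_neg at hc
    have h3 : Lb n c (i+1) ≤ Lb n c (idx n c t) := Lb_mono hc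
    have hne2 : ({i' | Lb n c i' ≤ t} : Set ℕ).Nonempty := ⟨i, h1⟩
    have h4 : Lb n c (idx n c t) ≤ t := Nat.sSup_mem hne2 hbd
    rw [Lb_succ_of_le hLn] at h3
    omega
  omega

end Blocks2

section Blocks3
variable {n : ℕ} {c : ℕ → ℝ}

lemma rvcAux_lt_next {i : ℕ} (h : Lb n c (i+1) ≤ n) :
    rvcAux n c (Lb n c i) < rvcAux n c (Lb n c (i+1)) := by
  have hLi : Lb n c i ≤ n := Lb_le_of_succ_le h
  have heq : Lb n c (i+1) = bEnd n c (Lb n c i) + 1 := Lb_succ_of_le hLi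
  set l := Lb n c i with hl
  set e := bEnd n c l with he
  obtain ⟨hle, hen, havg⟩ := bEnd_mem (c := c) hLi
  obtain ⟨k', hk1, hk2, hk3⟩ := exists_rvcAux (c := c) (l := Lb n c (i+1)) h
  rw [heq] at hk1 hk3 ⊢
  by_contra hc
  push_neg at hc
  have hvk : avg c (e+1) k' ≤ rvcAux n c l := hk3 ▸ hc
  have hl1 : 1 ≤ l := Lb_pos i
  have hsplit : ∑ t ∈ Finset.Icc l k', vc c t
      = ∑ t ∈ Finset.Icc l e, vc c t + ∑ t ∈ Finset.Icc (e+1) k', vc c t :=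
    sum_split _ hl1 (by omega) (by omega)
  have h1 : ∑ t ∈ Finset.Icc l e, vc c t = rvcAux n c l * ((e:ℝ) - l + 1) := by
    rw [← havg, avg_mul hle]
  have h2 : ∑ t ∈ Finset.Icc (e+1) k', vc c t
      = avg c (e+1) k' * ((k':ℝ) - ((e:ℝ)+1) + 1) := by
    rw [← avg_mul hk1]; push_cast; ring
  have hlen2 : (0:ℝ) ≤ (k':ℝ) - ((e:ℝ)+1) + 1 := by
    have : ((e:ℝ)+1) ≤ (k':ℝ) := by exact_mod_cast hk1
    linarith
  have h3 : ∑ t ∈ Finset.Icc l k', vc c t ≤ rvcAux n c l * ((k':ℝ) - l + 1) := by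
    rw [hsplit, h1, h2]
    have := mul_le_mul_of_nonneg_right hvk hlen2
    nlinarith
  have h4 : avg c l k' ≤ rvcAux n c l := by
    rw [avg, div_le_iff₀ (len_pos (by omega))]
    exact h3
  have h5 : k' ≤ e := le_bEnd (by omega) hk2 h4
  omega

lemma rvcAux_mono_blocks : ∀ i' i, i ≤ i' → Lb n c i' ≤ n →
    rvcAux n c (Lb n c i) ≤ rvcAux n c (Lb n c i') := by
  intro i'
  induction i' with
  | zero => intro i hi _; interval_cases i; exact le_refl _
  | succ i' ih =>
    intro i hi h
    rcases Nat.lt_or_ge i (i'+1) with h1 | h1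
    · have h2 : Lb n c i' ≤ n := Lb_le_of_succ_le h
      exact le_trans (ih i (by omega) h2) (le_of_lt (rvcAux_lt_next h))
    · have : i = i' + 1 := by omega
      subst this; exact le_refl _

lemma tail_sum {l m : ℕ} (hl1 : 1 ≤ l) (hln : l ≤ n) (hm : l ≤ m)
    (hme : m ≤ bEnd n c l) :
    ∑ t ∈ Finset.Icc m (bEnd n c l), vc c t
      ≤ ((bEnd n c l : ℝ) - m + 1) * rvcAux n c l := by
  obtain ⟨hle, hen, havg⟩ := bEnd_mem (c := c) hln
  set e := bEnd n c l with he
  rcases Nat.eq_or_lt_of_le hm with h | h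
  · subst h
    rw [← avg_mul hme, havg]; ring_nf; exact le_refl _
  · have hsplit : ∑ t ∈ Finset.Icc l e, vc c t
        = ∑ t ∈ Finset.Icc l (m-1), vc c t + ∑ t ∈ Finset.Icc m e, vc c t := by
      have hmm : m - 1 + 1 = m := by omega
      have h0 := sum_split (vc c) (l := l) (m := m-1) (k := e) hl1 (by omega) (by omega)
      rw [hmm] at h0
      exact h0
    have h1 : ∑ t ∈ Finset.Icc l e, vc c t = rvcAux n c l * ((e:ℝ) - l + 1) := by
      rw [← havg, avg_mul hle]
    have h2 : rvcAux n c l * (((m:ℝ)-1) - l + 1) ≤ ∑ t ∈ Finset.Icc l (m-1), vc c t := by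
      have hle2 : rvcAux n c l ≤ avg c l (m-1) := rvcAux_le (by omega) (by omega)
      have := mul_le_mul_of_nonneg_right hle2 (le_of_lt (len_pos (l := l) (k := m-1) (by omega)))
      rw [avg_mul (by omega)] at this
      have hcast : ((m-1 : ℕ) : ℝ) = (m:ℝ) - 1 := by
        have : 1 ≤ m := by omega
        push_cast [this]; ring
      rw [hcast] at this
      linarith
    linarith [hsplit, h1, h2]

lemma chain_sum : ∀ i, Lb n c i ≤ n → ∀ m l, m ≤ i → Lb n c m ≤ l →
    l ≤ bEnd n c (Lb n c m) →
    ∑ t ∈ Finset.Icc l (bEnd n c (Lb n c i)), vc c t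
      ≤ ((bEnd n c (Lb n c i) : ℝ) - l + 1) * rvcAux n c (Lb n c i) := by
  intro i
  induction i with
  | zero =>
    intro h m l hm h1 h2
    interval_cases m
    exact tail_sum (Lb_pos 0) h h1 h2
  | succ i ih =>
    intro h m l hm h1 h2
    rcases Nat.eq_or_lt_of_le hm with hcase | hcase
    · subst hcase
      exact tail_sum (Lb_pos _) h h1 h2
    · have hmi : m ≤ i := by omega
      have hLi : Lb n c i ≤ n := Lb_le_of_succ_le h
      have heq : Lb n c (i+1) = bEnd n c (Lb n c i) + 1 := Lb_succ_of_le hLi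
      set ei := bEnd n c (Lb n c i) with hei
      obtain ⟨hle', hen', _⟩ := bEnd_mem (c := c) (l := Lb n c (i+1)) h
      set e' := bEnd n c (Lb n c (i+1)) with he'
      have hlei : l ≤ ei := by
        have h3 : bEnd n c (Lb n c m) < Lb n c (m+1) := by
          rw [Lb_succ_of_le (le_trans (Lb_mono hmi) hLi)]
          · omega
        have h4 : Lb n c (m+1) ≤ Lb n c (i+1) := Lb_mono (by omega)
        omega
      have hl1 : 1 ≤ l := le_trans (Lb_pos m) h1
      have heie' : ei < e' := by omega
      have hsplit : ∑ t ∈ Finset.Icc l e', vc c t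
          = ∑ t ∈ Finset.Icc l ei, vc c t + ∑ t ∈ Finset.Icc (Lb n c (i+1)) e', vc c t := by
        rw [heq]
        exact sum_split _ hl1 (by omega) (by omega)
      have hIH : ∑ t ∈ Finset.Icc l ei, vc c t ≤ ((ei:ℝ) - l + 1) * rvcAux n c (Lb n c i) :=
        ih hLi m l hmi h1 h2
      have hmono2 : rvcAux n c (Lb n c i) ≤ rvcAux n c (Lb n c (i+1)) :=
        le_of_lt (rvcAux_lt_next h)
      have hlen : (0:ℝ) ≤ (ei:ℝ) - l + 1 := le_of_lt (len_pos hlei)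
      have hIH2 : ∑ t ∈ Finset.Icc l ei, vc c t
          ≤ ((ei:ℝ) - l + 1) * rvcAux n c (Lb n c (i+1)) :=
        le_trans hIH (mul_le_mul_of_nonneg_left hmono2 hlen)
      have htail : ∑ t ∈ Finset.Icc (Lb n c (i+1)) e', vc c t
          ≤ ((e':ℝ) - (Lb n c (i+1) : ℝ) + 1) * rvcAux n c (Lb n c (i+1)) :=
        tail_sum (l := Lb n c (i+1)) (Lb_pos _) h (le_refl _) hle'
      have hcast : (Lb n c (i+1) : ℝ) = (ei:ℝ) + 1 := by rw [heq]; push_cast; ring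
      rw [hsplit]
      rw [hcast] at htail
      nlinarith [hIH2, htail]

lemma rvc_block {j : ℕ} (hj1 : 1 ≤ j) (hjn : j ≤ n) :
    rvc n c j = rvcAux n c (Lb n c (idx n c j)) := by
  obtain ⟨hLj, hje⟩ := idx_spec (c := c) hj1 hjn
  set i := idx n c j with hi
  have hLn : Lb n c i ≤ n := le_trans hLj hjn
  obtain ⟨hLe, hen, _⟩ := bEnd_mem (c := c) hLn
  apply le_antisymm
  · apply rvc_le hj1
    intro l hl1 hlj
    have hln : l ≤ n := le_trans hlj hjn
    set m := idx n c l with hm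
    obtain ⟨hLm, hlm⟩ := idx_spec (c := c) hl1 hln
    have hmi : m ≤ i := by
      have hbd : BddAbove {i' | Lb n c i' ≤ j} := by
        refine ⟨j, fun i' hi' => ?_⟩
        have h5 : Lb n c i' ≤ j := hi'
        have := Lb_gt (c := c) (le_trans h5 hjn)
        omega
      exact le_csSup hbd (show Lb n c m ≤ j from le_trans hLm hlj)
    have hchain := chain_sum i hLn m l hmi hLm hlm
    have hle2 : l ≤ bEnd n c (Lb n c i) := le_trans hlj hje
    have h6 : avg c l (bEnd n c (Lb n c i)) ≤ rvcAux n c (Lb n c i) := by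
      rw [avg, div_le_iff₀ (len_pos hle2)]
      calc ∑ t ∈ Finset.Icc l (bEnd n c (Lb n c i)), vc c t
          ≤ ((bEnd n c (Lb n c i) : ℝ) - l + 1) * rvcAux n c (Lb n c i) := hchain
      _ = rvcAux n c (Lb n c i) * ((bEnd n c (Lb n c i) : ℝ) - l + 1) := by ring
    exact le_trans (rvcAux_le hle2 hen) h6
  · exact rvcAux_le_rvc (Lb_pos i) hLj

end Blocks3

section Phi
variable {n : ℕ} {c : ℕ → ℝ}

lemma phi_sum : ∀ j, 1 ≤ j → j ≤ n →
    (∑ t ∈ Finset.Icc 1 j, rvc n c t ≤ ∑ t ∈ Finset.Icc 1 j, vc c t) ∧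
    (j = bEnd n c (Lb n c (idx n c j)) →
      ∑ t ∈ Finset.Icc 1 j, rvc n c t = ∑ t ∈ Finset.Icc 1 j, vc c t) := by
  intro j
  induction j using Nat.strong_induction_on with
  | _ j ih =>
  intro hj1 hjn
  obtain ⟨hLj, hje⟩ := idx_spec (c := c) hj1 hjn
  obtain ⟨i, hidef⟩ : ∃ i, idx n c j = i := ⟨_, rfl⟩
  rw [hidef] at hLj hje
  obtain ⟨l, hldef⟩ : ∃ l, Lb n c i = l := ⟨_, rfl⟩
  rw [hldef] at hLj hje
  obtain ⟨e, hedef⟩ : ∃ e, bEnd n c l = e := ⟨_, rfl⟩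
  rw [hedef] at hje
  rw [hidef, hldef, hedef]
  have hLn : l ≤ n := le_trans hLj hjn
  obtain ⟨hLe, hen, havg⟩ := bEnd_mem (c := c) hLn
  rw [hedef] at hLe hen havg
  have hl1 : 1 ≤ l := by rw [← hldef]; exact Lb_pos i
  have hconst : ∀ t, l ≤ t → t ≤ j → rvc n c t = rvcAux n c l := by
    intro t h1 h2
    have hidx : idx n c t = i :=
      idx_eq (by rw [hldef]; exact hLn) (by rw [hldef]; exact h1)
        (by rw [hldef, hedef]; exact le_trans h2 hje)
    rw [rvc_block (le_trans hl1 h1) (le_trans h2 hjn), hidx, hldef]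
  have hcast : ((j + 1 - l : ℕ) : ℝ) = (j:ℝ) - l + 1 := by
    have h5 : l ≤ j + 1 := by omega
    push_cast [Nat.cast_sub h5]
    ring
  have hcard : ∑ t ∈ Finset.Icc l j, rvc n c t = ((j:ℝ) - l + 1) * rvcAux n c l := by
    have h0 : ∑ t ∈ Finset.Icc l j, rvc n c t
        = ∑ _t ∈ Finset.Icc l j, rvcAux n c l :=
      Finset.sum_congr rfl (fun t ht => by
        rw [Finset.mem_Icc] at ht
        exact hconst t ht.1 ht.2)
    rw [h0, Finset.sum_const, Nat.card_Icc, nsmul_eq_mul, hcast]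
  have hcore_le : ((j:ℝ) - l + 1) * rvcAux n c l ≤ ∑ t ∈ Finset.Icc l j, vc c t := by
    have h1 : rvcAux n c l ≤ avg c l j := rvcAux_le hLj hjn
    have h2 := mul_le_mul_of_nonneg_right h1 (le_of_lt (len_pos hLj))
    rw [avg_mul hLj] at h2
    linarith
  have hcore_eq : j = e →
      ((j:ℝ) - l + 1) * rvcAux n c l = ∑ t ∈ Finset.Icc l j, vc c t := by
    rintro rfl
    rw [← havg, mul_comm]
    exact avg_mul hLe
  rcases Nat.eq_or_lt_of_le hl1 with hl | hl
  · -- l = 1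
    have hIcc : Finset.Icc 1 j = Finset.Icc l j := by rw [← hl]
    constructor
    · rw [hIcc, hcard]; exact hcore_le
    · intro hj; rw [hIcc, hcard]; exact hcore_eq hj
  · -- 2 ≤ l, so i ≥ 1
    have hi1 : 1 ≤ i := by
      by_contra hc
      have h6 : i = 0 := by omega
      rw [h6] at hldef
      simp [Lb] at hldef
      omega
    obtain ⟨i', rfl⟩ : ∃ i', i = i' + 1 := ⟨i - 1, by omega⟩
    have hLi' : Lb n c i' ≤ n := Lb_le_of_succ_le (by rw [hldef]; exact hLn)
    have heq : l = bEnd n c (Lb n c i') + 1 := by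
      rw [← hldef]; exact Lb_succ_of_le hLi'
    have hl01 : 1 ≤ bEnd n c (Lb n c i') := le_trans (Lb_pos i') (bEnd_mem hLi').1
    have hl0j : bEnd n c (Lb n c i') < j := by omega
    have hidx0 : idx n c (bEnd n c (Lb n c i')) = i' :=
      idx_eq hLi' (bEnd_mem hLi').1 (le_refl _)
    have hihe := (ih _ hl0j hl01 (by omega)).2 (by rw [hidx0])
    have hsplit1 : ∑ t ∈ Finset.Icc 1 j, rvc n c t
        = ∑ t ∈ Finset.Icc 1 (bEnd n c (Lb n c i')), rvc n c t
          + ∑ t ∈ Finset.Icc l j, rvc n c t := by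
      have h7 := sum_split (rvc n c) (l := 1) (m := bEnd n c (Lb n c i')) (k := j)
        (le_refl 1) (by omega) (by omega)
      rw [h7, ← heq]
    have hsplit2 : ∑ t ∈ Finset.Icc 1 j, vc c t
        = ∑ t ∈ Finset.Icc 1 (bEnd n c (Lb n c i')), vc c t
          + ∑ t ∈ Finset.Icc l j, vc c t := by
      have h7 := sum_split (vc c) (l := 1) (m := bEnd n c (Lb n c i')) (k := j)
        (le_refl 1) (by omega) (by omega)
      rw [h7, ← heq]
    constructor
    · rw [hsplit1, hsplit2, hihe, hcard]
      linarith [hcore_le]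
    · intro hj
      rw [hsplit1, hsplit2, hihe, hcard, hcore_eq hj]

lemma phi_sum_le {j : ℕ} (hj1 : 1 ≤ j) (hjn : j ≤ n) :
    ∑ t ∈ Finset.Icc 1 j, rvc n c t ≤ ∑ t ∈ Finset.Icc 1 j, vc c t :=
  (phi_sum j hj1 hjn).1

lemma phi_sum_total (hn : 1 ≤ n) :
    ∑ t ∈ Finset.Icc 1 n, rvc n c t = ∑ t ∈ Finset.Icc 1 n, vc c t := by
  obtain ⟨hLn, hne⟩ := idx_spec (c := c) (j := n) hn (le_refl n)
  have he : bEnd n c (Lb n c (idx n c n)) ≤ n :=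
    (bEnd_mem (le_trans hLn (le_refl n))).2.1
  exact (phi_sum n hn (le_refl n)).2 (by omega)

lemma rvc_eq_succ_of_lt {j : ℕ} (hj1 : 1 ≤ j) (hjn : j < n)
    (h : ∑ t ∈ Finset.Icc 1 j, rvc n c t < ∑ t ∈ Finset.Icc 1 j, vc c t) :
    rvc n c j = rvc n c (j+1) := by
  obtain ⟨hLj, hje⟩ := idx_spec (c := c) hj1 (le_of_lt hjn)
  have hLn : Lb n c (idx n c j) ≤ n := le_trans hLj (le_of_lt hjn)
  have hne : j ≠ bEnd n c (Lb n c (idx n c j)) := by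
    intro hc
    exact absurd ((phi_sum j hj1 (le_of_lt hjn)).2 hc) (ne_of_lt h)
  have hjlt : j < bEnd n c (Lb n c (idx n c j)) := by omega
  have hidx1 : idx n c (j+1) = idx n c j := idx_eq hLn (by omega) (by omega)
  rw [rvc_block hj1 (le_of_lt hjn), rvc_block (by omega) (by omega), hidx1]

lemma abelP (x : ℕ → ℝ)
    (hx : ∀ m, 1 ≤ m → m < n →
      0 ≤ (∑ t ∈ Finset.Icc 1 m, vc c t - ∑ t ∈ Finset.Icc 1 m, rvc n c t) * (x m - x (m+1))) :
    ∀ m, 1 ≤ m → m ≤ n →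
    ∑ t ∈ Finset.Icc 1 m, x t * rvc n c t
      + (∑ t ∈ Finset.Icc 1 m, vc c t - ∑ t ∈ Finset.Icc 1 m, rvc n c t) * x m
      ≤ ∑ t ∈ Finset.Icc 1 m, x t * vc c t := by
  intro m
  induction m with
  | zero => omega
  | succ m ihm =>
    intro _ hmn
    rcases Nat.eq_or_lt_of_le (show 1 ≤ m + 1 by omega) with h1 | h1
    · rw [← h1]
      norm_num
      have hr : x 1 * rvc n c 1 + (vc c 1 - rvc n c 1) * x 1 = x 1 * vc c 1 := by ring
      linarith
    · have hm1 : 1 ≤ m := by omega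
      have ih := ihm hm1 (by omega)
      have hxm := hx m hm1 (by omega)
      simp only [Finset.sum_Icc_succ_top (show 1 ≤ m + 1 by omega)]
      nlinarith [ih, hxm]

lemma abelQ (x : ℕ → ℝ)
    (hx : ∀ m, 1 ≤ m → m < n →
      (∑ t ∈ Finset.Icc 1 m, vc c t - ∑ t ∈ Finset.Icc 1 m, rvc n c t) * (x m - x (m+1)) = 0) :
    ∀ m, 1 ≤ m → m ≤ n →
    ∑ t ∈ Finset.Icc 1 m, x t * rvc n c t
      + (∑ t ∈ Finset.Icc 1 m, vc c t - ∑ t ∈ Finset.Icc 1 m, rvc n c t) * x m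
      = ∑ t ∈ Finset.Icc 1 m, x t * vc c t := by
  intro m
  induction m with
  | zero => omega
  | succ m ihm =>
    intro _ hmn
    rcases Nat.eq_or_lt_of_le (show 1 ≤ m + 1 by omega) with h1 | h1
    · rw [← h1]
      norm_num
      ring
    · have hm1 : 1 ≤ m := by omega
      have ih := ihm hm1 (by omega)
      have hxm := hx m hm1 (by omega)
      simp only [Finset.sum_Icc_succ_top (show 1 ≤ m + 1 by omega)]
      nlinarith [ih, hxm]

end Phi

/-- A pair `(A, U)` is feasible: `0 < A_j ≤ 1`, `0 ≤ U_j ≤ 1`, the sequence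
`(1−U_j)·A_j` is non-increasing, and the expected spending is within `B`. -/
def FeasPair (n : ℕ) (c : ℕ → ℝ) (B : ℝ) (A U : ℕ → ℝ) : Prop :=
  (∀ j, 1 ≤ j → j ≤ n → 0 < A j ∧ A j ≤ 1 ∧ 0 ≤ U j ∧ U j ≤ 1) ∧
    (∀ j, 1 ≤ j → j < n → (1 - U (j + 1)) * A (j + 1) ≤ (1 - U j) * A j) ∧
    ∑ j ∈ Finset.Icc 1 n, (1 - U j) * A j * vc c j ≤ B

/-- The objective
`V(A,U) = β²·(1/n)·Σ (1−U_j)/A_j + ((1/n)·Σ U_j)²`. -/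
noncomputable def objV (n : ℕ) (c : ℕ → ℝ) (β : ℝ) (A U : ℕ → ℝ) : ℝ :=
  β ^ 2 * (1 / (n : ℝ)) * (∑ j ∈ Finset.Icc 1 n, (1 - U j) / A j) +
    ((1 / (n : ℝ)) * ∑ j ∈ Finset.Icc 1 n, U j) ^ 2

/-- A feasible pair is optimal if it minimizes the objective over all
feasible pairs. -/
def OptimalPair (n : ℕ) (c : ℕ → ℝ) (B β : ℝ) (A U : ℕ → ℝ) : Prop :=
  FeasPair n c B A U ∧
    ∀ A' U', FeasPair n c B A' U' → objV n c β A U ≤ objV n c β A' U'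

/-- for fixed `U*` (non-decreasing and constant on level sets of
`φ`), the allocation `A*_j = min{1, λ/√φ_j}` exhausting the budget minimizes
`Σ (1−U*_j)/A_j` over all constrained allocations. -/
theorem stmt17 (n : ℕ) (hn : 1 ≤ n) (c : ℕ → ℝ) (hc0 : c 0 = 0) (hc1 : 0 < c 1)
    (hmono : ∀ a b, a ≤ b → b ≤ n → c a ≤ c b)
    (B : ℝ) (hB : 0 < B)
    (U : ℕ → ℝ) (hU : ∀ j, 1 ≤ j → j ≤ n → 0 ≤ U j ∧ U j ≤ 1)
    (hUmono : ∀ j, 1 ≤ j → j < n → U j ≤ U (j + 1))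
    (hUlevel : ∀ j k, 1 ≤ j → j ≤ n → 1 ≤ k → k ≤ n →
      rvc n c j = rvc n c k → U j = U k)
    (lam : ℝ) (hlam : 0 < lam)
    (Astar : ℕ → ℝ)
    (hAstar : ∀ j, 1 ≤ j → j ≤ n → Astar j = min 1 (lam / Real.sqrt (rvc n c j)))
    (hbudget : ∑ j ∈ Finset.Icc 1 n, (1 - U j) * Astar j * vc c j = B) :
    ∀ A : ℕ → ℝ,
      (∀ j, 1 ≤ j → j ≤ n → 0 < A j ∧ A j ≤ 1) →
      (∀ j, 1 ≤ j → j < n → (1 - U (j + 1)) * A (j + 1) ≤ (1 - U j) * A j) →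
      (∑ j ∈ Finset.Icc 1 n, (1 - U j) * A j * vc c j ≤ B) →
      ∑ j ∈ Finset.Icc 1 n, (1 - U j) / Astar j ≤
        ∑ j ∈ Finset.Icc 1 n, (1 - U j) / A j := by
  intro A hA hAmono hAbud
  have hφpos : ∀ j, 1 ≤ j → j ≤ n → 0 < rvc n c j := fun j h1 _ =>
    lt_of_lt_of_le hc1 (rvc_ge_c1 hn hmono h1)
  have hD0 : (∑ t ∈ Finset.Icc 1 n, vc c t - ∑ t ∈ Finset.Icc 1 n, rvc n c t) = 0 := by
    rw [phi_sum_total hn]; ring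
  -- pointwise key inequality
  have key : ∀ j ∈ Finset.Icc 1 n,
      rvc n c j / lam^2 * ((1 - U j) * Astar j - (1 - U j) * A j)
        ≤ (1 - U j) / A j - (1 - U j) / Astar j := by
    intro j hj
    rw [Finset.mem_Icc] at hj
    obtain ⟨h1, h2⟩ := hj
    obtain ⟨hA0, hA1⟩ := hA j h1 h2
    obtain ⟨hU0, hU1⟩ := hU j h1 h2
    have hw : 0 ≤ 1 - U j := by linarith
    have hφ : 0 < rvc n c j := hφpos j h1 h2
    have hs : 0 < Real.sqrt (rvc n c j) := Real.sqrt_pos.2 hφ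
    have hs2 : Real.sqrt (rvc n c j) ^ 2 = rvc n c j := Real.sq_sqrt hφ.le
    have hst0 : 0 < Astar j := by
      rw [hAstar j h1 h2]; exact lt_min one_pos (div_pos hlam hs)
    have conv : (1 - U j)/(Astar j)^2 * (Astar j - A j)
        ≤ (1 - U j)/A j - (1 - U j)/Astar j := by
      have hkey : (1 - U j)/A j - (1 - U j)/Astar j
          - (1 - U j)/(Astar j)^2 * (Astar j - A j)
          = (1 - U j) * (Astar j - A j)^2 / (A j * (Astar j)^2) := by
        field_simp
      have hpos : 0 ≤ (1 - U j) * (Astar j - A j)^2 / (A j * (Astar j)^2) := by positivity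
      linarith
    have step : rvc n c j / lam^2 * ((1 - U j) * Astar j - (1 - U j) * A j)
        ≤ (1 - U j)/(Astar j)^2 * (Astar j - A j) := by
      rcases le_or_gt (lam / Real.sqrt (rvc n c j)) 1 with hcase | hcase
      · have hAs : Astar j = lam / Real.sqrt (rvc n c j) := by
          rw [hAstar j h1 h2]; exact min_eq_right hcase
        have hEq : (1 - U j)/(Astar j)^2 * (Astar j - A j)
            = rvc n c j / lam^2 * ((1 - U j) * Astar j - (1 - U j) * A j) := by
          rw [hAs, ← hs2]
          field_simp
          rw [Real.sqrt_sq hs.le]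
        exact le_of_eq hEq.symm
      · have hAs : Astar j = 1 := by
          rw [hAstar j h1 h2]; exact min_eq_left hcase.le
        have hslt : Real.sqrt (rvc n c j) < lam := by
          rcases lt_div_iff₀ hs |>.1 hcase with h
          linarith
        have hlt : rvc n c j ≤ lam^2 := by nlinarith [hs.le]
        have h9 : rvc n c j / lam^2 ≤ 1 := by
          rw [div_le_one (by positivity)]; exact hlt
        have h10 : 0 ≤ 1 - A j := by linarith
        rw [hAs]
        have h11 : 0 ≤ rvc n c j / lam^2 := by positivity
        have h12 : (1 - U j) * 1 - (1 - U j) * A j = (1 - U j) * (1 - A j) := by ring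
        rw [h12]
        have h13 : (1 - U j)/(1:ℝ)^2 * (1 - A j) = (1 - U j) * (1 - A j) := by norm_num
        rw [h13]
        nlinarith [mul_nonneg hw h10]
    exact le_trans step conv
  have hsum := Finset.sum_le_sum key
  have hR : ∑ j ∈ Finset.Icc 1 n, ((1 - U j) / A j - (1 - U j) / Astar j)
      = ∑ j ∈ Finset.Icc 1 n, (1 - U j) / A j
        - ∑ j ∈ Finset.Icc 1 n, (1 - U j) / Astar j :=
    Finset.sum_sub_distrib _ _
  have hL : ∑ j ∈ Finset.Icc 1 n,
        rvc n c j / lam^2 * ((1 - U j) * Astar j - (1 - U j) * A j)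
      = (∑ j ∈ Finset.Icc 1 n, ((1 - U j) * Astar j) * rvc n c j
          - ∑ j ∈ Finset.Icc 1 n, ((1 - U j) * A j) * rvc n c j) / lam^2 := by
    rw [← Finset.sum_sub_distrib, Finset.sum_div]
    exact Finset.sum_congr rfl (fun j _ => by ring)
  -- Abel facts
  have habel1 : ∑ j ∈ Finset.Icc 1 n, ((1 - U j) * A j) * rvc n c j ≤ B := by
    have h0 := abelP (n := n) (c := c) (fun j => (1 - U j) * A j)
      (fun m hm1 hmn => mul_nonneg
        (sub_nonneg.2 (phi_sum_le hm1 (le_of_lt hmn)))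
        (sub_nonneg.2 (hAmono m hm1 hmn))) n hn (le_refl n)
    rw [hD0, zero_mul, add_zero] at h0
    exact le_trans h0 hAbud
  have habel2 : ∑ j ∈ Finset.Icc 1 n, ((1 - U j) * Astar j) * rvc n c j = B := by
    have h0 := abelQ (n := n) (c := c) (fun j => (1 - U j) * Astar j)
      (fun m hm1 hmn => by
        rcases eq_or_lt_of_le (phi_sum_le (n := n) (c := c) hm1 (le_of_lt hmn)) with he | hlt
        · rw [he, sub_self, zero_mul]
        · have hrvc : rvc n c m = rvc n c (m+1) := rvc_eq_succ_of_lt hm1 hmn hlt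
          have hUeq : U m = U (m+1) :=
            hUlevel m (m+1) hm1 (le_of_lt hmn) (by omega) (by omega) hrvc
          have hAeq : Astar m = Astar (m+1) := by
            rw [hAstar m hm1 (le_of_lt hmn), hAstar (m+1) (by omega) (by omega), hrvc]
          simp only [hUeq, hAeq, sub_self, mul_zero]) n hn (le_refl n)
    rw [hD0, zero_mul, add_zero] at h0
    exact h0.trans hbudget
  rw [hR, hL] at hsum
  have hnum : 0 ≤ (∑ j ∈ Finset.Icc 1 n, ((1 - U j) * Astar j) * rvc n c j
      - ∑ j ∈ Finset.Icc 1 n, ((1 - U j) * A j) * rvc n c j) / lam^2 := by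
    apply div_nonneg _ (sq_nonneg lam)
    linarith [habel1, habel2]
  linarith [hsum, hnum]
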